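/- If n ≥ 4 and S ⊆ {3,4,...,n-1}, then the graph G_n(S) contains exactly 1 + 2|S| + C(|S|,2) cycles, where C(|S|,2) is the binomial coefficient |S| choose 2. -/

import Mathlib

/-- The cycle `C_n` on vertex set `Fin n`, where label `i` represents the integer `i + 1`;
edges join consecutive integers mod `n` (i.e. `{i, i+1}` for `1 ≤ i ≤ n - 1` and `{n, 1}`). -/
def cycG (n : ℕ) : SimpleGraph (Fin n) :=
  SimpleGraph.fromRel (fun i j => (i.val + 1) % n = j.val)

/-- The graph `G_n(S)`: the cycle `C_n` together with a chord `{1, a}` for each `a ∈ S`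
(vertex label `i` represents the integer `i + 1`, so the integer vertex `1` is label `0`
and the integer vertex `a` is label `a - 1`). -/
def GnS (n : ℕ) (S : Finset ℕ) : SimpleGraph (Fin n) :=
  SimpleGraph.fromRel (fun i j => (i.val + 1) % n = j.val ∨ (i.val = 0 ∧ j.val + 1 ∈ S))


open SimpleGraph Walk

set_option maxHeartbeats 1000000

namespace Stmt8Aux

variable {V : Type*} {G : SimpleGraph V}

lemma nbr_not_mem_support {a b w : V} (p : G.Walk a b) (hw : w ∉ p.support) :
    {x | s(w,x) ∈ p.edges} = ∅ := by
  ext x; simp only [Set.mem_setOf_eq, Set.mem_empty_iff_false, iff_false]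
  exact fun he => hw (p.fst_mem_support_of_mem_edges he)

lemma nbr_start {a b : V} (p : G.Walk a b) (hp : p.IsPath) (hnil : ¬ p.Nil) :
    ∃ y, {x | s(a,x) ∈ p.edges} = {y} := by
  cases p with
  | nil => simp at hnil
  | @cons _ c _ h r =>
    refine ⟨c, ?_⟩
    have hns : a ∉ r.support := by
      have := hp.support_nodup
      simp only [support_cons, List.nodup_cons] at this
      exact this.1
    ext x
    simp only [Set.mem_setOf_eq, edges_cons, List.mem_cons, Set.mem_singleton_iff]
    constructor
    · rintro (he | he)
      · rcases Sym2.eq_iff.mp he with ⟨-, rfl⟩ | ⟨rfl, rfl⟩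
        · rfl
        · rfl
      · exact absurd (r.fst_mem_support_of_mem_edges he) hns
    · rintro rfl; exact Or.inl rfl

lemma nbr_end {a b : V} (p : G.Walk a b) (hp : p.IsPath) (hnil : ¬ p.Nil) :
    ∃ y, {x | s(b,x) ∈ p.edges} = {y} := by
  have h2 : ¬ p.reverse.Nil := by
    rw [nil_iff_length_eq, length_reverse]
    rw [nil_iff_length_eq] at hnil; exact hnil
  obtain ⟨y, hy⟩ := nbr_start p.reverse hp.reverse h2
  refine ⟨y, ?_⟩
  rw [← hy]
  ext x
  simp [edges_reverse]

lemma nbr_internal {a b w : V} (p : G.Walk a b) (hp : p.IsPath) (hw : w ∈ p.support)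
    (hwa : w ≠ a) (hwb : w ≠ b) :
    ∃ y z, y ≠ z ∧ {x | s(w,x) ∈ p.edges} = {y, z} := by
  induction p with
  | nil => simp at hw; exact absurd hw hwa
  | @cons a c b h r ih =>
    have hns : a ∉ r.support := by
      have := hp.support_nodup
      simp only [support_cons, List.nodup_cons] at this
      exact this.1
    have hwr : w ∈ r.support := by
      simp only [support_cons, List.mem_cons] at hw
      exact hw.resolve_left hwa
    by_cases hwc : w = c
    · subst hwc
      have hrnil : ¬ r.Nil := fun hnil => hwb hnil.eq
      obtain ⟨y, hy⟩ := nbr_start r hp.of_cons hrnil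
      have hyedge : s(w, y) ∈ r.edges := by
        have : y ∈ ({x | s(w, x) ∈ r.edges} : Set V) := by rw [hy]; rfl
        exact this
      refine ⟨a, y, ?_, ?_⟩
      · rintro rfl
        exact hns (r.snd_mem_support_of_mem_edges hyedge)
      · ext x
        simp only [Set.mem_setOf_eq, edges_cons, List.mem_cons, Set.mem_insert_iff,
          Set.mem_singleton_iff]
        constructor
        · rintro (he | he)
          · rcases Sym2.eq_iff.mp he with ⟨h1, -⟩ | ⟨-, rfl⟩
            · exact absurd h1 hwa
            · exact Or.inl rfl
          · right
            have : x ∈ ({x | s(w, x) ∈ r.edges} : Set V) := he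
            rw [hy] at this; exact this
        · rintro (rfl | rfl)
          · exact Or.inl Sym2.eq_swap
          · exact Or.inr hyedge
    · obtain ⟨y, z, hyz, hset⟩ := ih hp.of_cons hwr hwc hwb
      refine ⟨y, z, hyz, ?_⟩
      rw [← hset]
      ext x
      simp only [Set.mem_setOf_eq, edges_cons, List.mem_cons]
      constructor
      · rintro (he | he)
        · rcases Sym2.eq_iff.mp he with ⟨h1, -⟩ | ⟨h1, -⟩
          · exact absurd h1 hwa
          · exact absurd h1 hwc
        · exact he
      · exact fun he => Or.inr he

lemma cycle_nbr {u : V} (p : G.Walk u u) (hp : p.IsCycle) (w : V) :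
    {x | s(w,x) ∈ p.edges} = ∅ ∨ ∃ y z, y ≠ z ∧ {x | s(w,x) ∈ p.edges} = {y, z} := by
  cases p with
  | nil => exact absurd rfl hp.ne_nil
  | @cons _ v _ h q =>
    obtain ⟨hq, huv⟩ := (cons_isCycle_iff q h).mp hp
    have hqnil : ¬ q.Nil := fun hnil => h.ne hnil.eq.symm
    by_cases hws : w ∈ q.support
    · right
      by_cases hwv : w = v
      · subst hwv
        obtain ⟨y, hy⟩ := nbr_start q hq hqnil
        have hyedge : s(w, y) ∈ q.edges := by
          have : y ∈ ({x | s(w, x) ∈ q.edges} : Set V) := by rw [hy]; rfl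
          exact this
        refine ⟨u, y, ?_, ?_⟩
        · rintro rfl; rw [Sym2.eq_swap] at hyedge; exact huv hyedge
        · ext x
          simp only [Set.mem_setOf_eq, edges_cons, List.mem_cons, Set.mem_insert_iff,
            Set.mem_singleton_iff]
          constructor
          · rintro (he | he)
            · rcases Sym2.eq_iff.mp he with ⟨rfl, -⟩ | ⟨-, rfl⟩
              · exact absurd rfl h.ne'
              · exact Or.inl rfl
            · right
              have : x ∈ ({x | s(w, x) ∈ q.edges} : Set V) := he
              rw [hy] at this; exact this
          · rintro (rfl | hxy)
            · exact Or.inl Sym2.eq_swap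
            · rw [hxy]; exact Or.inr hyedge
      · by_cases hwu : w = u
        · subst hwu
          obtain ⟨y, hy⟩ := nbr_end q hq hqnil
          have hyedge : s(w, y) ∈ q.edges := by
            have : y ∈ ({x | s(w, x) ∈ q.edges} : Set V) := by rw [hy]; rfl
            exact this
          refine ⟨v, y, ?_, ?_⟩
          · rintro rfl; exact huv hyedge
          · ext x
            simp only [Set.mem_setOf_eq, edges_cons, List.mem_cons, Set.mem_insert_iff,
              Set.mem_singleton_iff]
            constructor
            · rintro (he | he)
              · rcases Sym2.eq_iff.mp he with ⟨-, rfl⟩ | ⟨h1, -⟩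
                · exact Or.inl rfl
                · exact absurd h1.symm h.ne'
              · right
                have : x ∈ ({x | s(w, x) ∈ q.edges} : Set V) := he
                rw [hy] at this; exact this
            · rintro (rfl | hxy)
              · exact Or.inl rfl
              · rw [hxy]; exact Or.inr hyedge
        · obtain ⟨y, z, hyz, hset⟩ := nbr_internal q hq hws hwv hwu
          refine ⟨y, z, hyz, ?_⟩
          rw [← hset]
          ext x
          simp only [Set.mem_setOf_eq, edges_cons, List.mem_cons]
          constructor
          · rintro (he | he)
            · rcases Sym2.eq_iff.mp he with ⟨h1, -⟩ | ⟨h1, -⟩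
              · exact absurd h1 hwu
              · exact absurd h1 hwv
            · exact he
          · exact fun he => Or.inr he
    · left
      have hwu : w ≠ u := fun hwu => hws (hwu ▸ q.end_mem_support)
      have hwv : w ≠ v := fun hwv => hws (hwv ▸ q.start_mem_support)
      ext x
      simp only [Set.mem_setOf_eq, edges_cons, List.mem_cons, Set.mem_empty_iff_false, iff_false]
      rintro (he | he)
      · rcases Sym2.eq_iff.mp he with ⟨h1, -⟩ | ⟨h1, -⟩
        · exact hwu h1
        · exact hwv h1
      · exact hws (q.fst_mem_support_of_mem_edges he)


lemma two_rule {N : Set V} (hN : N = ∅ ∨ ∃ y z, y ≠ z ∧ N = {y, z}) {u1 u2 : V}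
    (hsub : N ⊆ {u1, u2}) : u1 ∈ N ↔ u2 ∈ N := by
  rcases hN with rfl | ⟨y, z, hyz, rfl⟩
  · simp
  · have hy := hsub (Set.mem_insert y {z})
    have hz := hsub (Set.mem_insert_of_mem y rfl)
    simp only [Set.mem_insert_iff, Set.mem_singleton_iff] at hy hz ⊢
    rcases hy with rfl | rfl <;> rcases hz with rfl | rfl <;> tauto

lemma three_rule {N : Set V} (hN : N = ∅ ∨ ∃ y z, y ≠ z ∧ N = {y, z}) {u1 u2 u3 : V}
    (h12 : u1 ≠ u2) (h13 : u1 ≠ u3) (h23 : u2 ≠ u3)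
    (hsub : N ⊆ {u1, u2, u3}) : (u1 ∈ N ↔ (u2 ∈ N ↔ ¬ u3 ∈ N)) := by
  rcases hN with rfl | ⟨y, z, hyz, rfl⟩
  · simp
  · have hy := hsub (Set.mem_insert y {z})
    have hz := hsub (Set.mem_insert_of_mem y rfl)
    simp only [Set.mem_insert_iff, Set.mem_singleton_iff] at hy hz ⊢
    rcases hy with rfl | rfl | rfl <;> rcases hz with rfl | rfl | rfl <;> tauto

lemma chainX (X : ℕ → Prop) : ∀ i j, i ≤ j → (∀ k, i < k → k ≤ j → (X (k-1) ↔ X k)) →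
    (X i ↔ X j) := by
  intro i j hij
  induction j, hij using Nat.le_induction with
  | base => intro _; rfl
  | succ m hm ih =>
    intro h
    have h1 : X i ↔ X m := ih (fun k hk1 hk2 => h k hk1 (by omega))
    have h2 : X m ↔ X (m+1) := by
      have := h (m+1) (by omega) le_rfl
      simpa using this
    exact h1.trans h2

section FinStuff
open Fin.NatCast
variable {n : ℕ} [NeZero n]

def re (n : ℕ) [NeZero n] (i : ℕ) : Sym2 (Fin n) := s((i : Fin n), ((i+1 : ℕ) : Fin n))
def ch (n : ℕ) [NeZero n] (a : ℕ) : Sym2 (Fin n) := s(((0:ℕ) : Fin n), ((a-1 : ℕ) : Fin n))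

lemma ceq {x y : ℕ} : ((x : Fin n) = (y : Fin n)) ↔ x % n = y % n := by
  rw [Fin.ext_iff, Fin.val_natCast, Fin.val_natCast]

lemma cne {x y : ℕ} (hx : x < n) (hy : y < n) (hxy : x ≠ y) : (x : Fin n) ≠ (y : Fin n) := by
  rw [Ne, ceq, Nat.mod_eq_of_lt hx, Nat.mod_eq_of_lt hy]; exact hxy

variable {S : Finset ℕ}

lemma ring_adj (hn : 4 ≤ n) (i : ℕ) : (GnS n S).Adj (i : Fin n) ((i+1 : ℕ) : Fin n) := by
  rw [GnS, SimpleGraph.fromRel_adj]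
  constructor
  · rw [Ne, ceq]
    intro h
    have h2 := Nat.ModEq.add_left_cancel' i (show i + 0 ≡ i + 1 [MOD n] by rw [Nat.add_zero]; exact h)
    have h3 : 0 % n = 1 % n := h2
    rw [Nat.zero_mod, Nat.mod_eq_of_lt (by omega)] at h3
    omega
  · left; left
    rw [Fin.val_natCast, Fin.val_natCast, Nat.mod_add_mod]

lemma chord_adj (hn : 4 ≤ n) {a : ℕ} (ha3 : 3 ≤ a) (han : a ≤ n - 1) (haS : a ∈ S) :
    (GnS n S).Adj (((0:ℕ)) : Fin n) ((a-1 : ℕ) : Fin n) := by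
  rw [GnS, SimpleGraph.fromRel_adj]
  have h1 : (a-1) % n = a-1 := Nat.mod_eq_of_lt (by omega)
  refine ⟨?_, Or.inl (Or.inr ⟨?_, ?_⟩)⟩
  · rw [Ne, ceq, Nat.zero_mod, h1]; omega
  · rw [Fin.val_natCast, Nat.zero_mod]
  · rw [Fin.val_natCast, h1]
    have h2 : a - 1 + 1 = a := by omega
    rw [h2]; exact haS

lemma re_inj (hn : 4 ≤ n) {i j : ℕ} (hi : i < n) (hj : j < n) (h : re n i = re n j) :
    i = j := by
  rw [re, re, Sym2.eq_iff] at h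
  rcases h with ⟨h1, -⟩ | ⟨h1, h2⟩
  · rw [ceq, Nat.mod_eq_of_lt hi, Nat.mod_eq_of_lt hj] at h1; exact h1
  · exfalso
    rw [ceq, Nat.mod_eq_of_lt hi] at h1
    rw [ceq, Nat.mod_eq_of_lt hj] at h2
    rcases Nat.lt_or_ge (j+1) n with hj1 | hj1
    · rw [Nat.mod_eq_of_lt hj1] at h1
      rcases Nat.lt_or_ge (i+1) n with hi1 | hi1
      · rw [Nat.mod_eq_of_lt hi1] at h2; omega
      · have : i + 1 = n := by omega
        rw [this, Nat.mod_self] at h2; omega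
    · have hj2 : j + 1 = n := by omega
      rw [hj2, Nat.mod_self] at h1
      rcases Nat.lt_or_ge (i+1) n with hi1 | hi1
      · rw [Nat.mod_eq_of_lt hi1] at h2; omega
      · omega

lemma ch_inj (hn : 4 ≤ n) {a b : ℕ} (ha3 : 3 ≤ a) (han : a ≤ n-1) (hb3 : 3 ≤ b)
    (hbn : b ≤ n-1) (h : ch n a = ch n b) : a = b := by
  rw [ch, ch, Sym2.eq_iff] at h
  rcases h with ⟨-, h2⟩ | ⟨h1, -⟩
  · rw [ceq, Nat.mod_eq_of_lt (by omega : a-1 < n), Nat.mod_eq_of_lt (by omega : b-1 < n)] at h2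
    omega
  · exfalso
    rw [ceq, Nat.zero_mod, Nat.mod_eq_of_lt (by omega : b-1 < n)] at h1
    omega

lemma ch_ne_re (hn : 4 ≤ n) {a i : ℕ} (ha3 : 3 ≤ a) (han : a ≤ n-1) (hi : i < n) :
    ch n a ≠ re n i := by
  rw [ch, re, Ne, Sym2.eq_iff]
  push_neg
  constructor
  · intro h1
    rw [ceq, Nat.zero_mod, Nat.mod_eq_of_lt hi] at h1
    subst h1
    rw [Ne, ceq, Nat.mod_eq_of_lt (by omega : a-1 < n), Nat.mod_eq_of_lt (by omega : (0:ℕ)+1 < n)]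
    omega
  · intro h1
    rw [ceq, Nat.zero_mod] at h1
    have hi1 : i + 1 = n := by
      rcases Nat.lt_or_ge (i+1) n with h2 | h2
      · rw [Nat.mod_eq_of_lt h2] at h1; omega
      · omega
    exact cne (by omega) hi (by omega)

lemma mem_edgeSet_cases (hn : 4 ≤ n) {e : Sym2 (Fin n)} (he : e ∈ (GnS n S).edgeSet) :
    (∃ i, i < n ∧ e = re n i) ∨ (∃ a ∈ S, e = ch n a) := by
  induction e using Sym2.ind with
  | _ x y =>
    rw [SimpleGraph.mem_edgeSet, GnS, SimpleGraph.fromRel_adj] at he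
    obtain ⟨hne, hrel⟩ := he
    have hx : ((x.val : ℕ) : Fin n) = x := Fin.cast_val_eq_self x
    have hy : ((y.val : ℕ) : Fin n) = y := Fin.cast_val_eq_self y
    rcases hrel with (hr | hc) | (hr | hc)
    · left
      refine ⟨x.val, x.isLt, ?_⟩
      rw [re, hx]
      have : ((x.val + 1 : ℕ) : Fin n) = y := by
        rw [Fin.ext_iff, Fin.val_natCast]; exact hr
      rw [this]
    · right
      refine ⟨y.val + 1, hc.2, ?_⟩
      rw [ch]
      have h0 : ((0:ℕ) : Fin n) = x := by
        rw [Fin.ext_iff, Fin.val_natCast, Nat.zero_mod]; exact hc.1.symm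
      have h1 : y.val + 1 - 1 = y.val := by omega
      rw [h0, h1, hy]
    · left
      refine ⟨y.val, y.isLt, ?_⟩
      rw [re, hy]
      have : ((y.val + 1 : ℕ) : Fin n) = x := by
        rw [Fin.ext_iff, Fin.val_natCast]; exact hr
      rw [this, Sym2.eq_swap]
    · right
      refine ⟨x.val + 1, hc.2, ?_⟩
      rw [ch]
      have h0 : ((0:ℕ) : Fin n) = y := by
        rw [Fin.ext_iff, Fin.val_natCast, Nat.zero_mod]; exact hc.1.symm
      have h1 : x.val + 1 - 1 = x.val := by omega
      rw [h0, h1, hx, Sym2.eq_swap]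

lemma adj_k (hn : 4 ≤ n) (hS : S ⊆ Finset.Icc 3 (n-1)) {k : ℕ} (h1 : 1 ≤ k) (h2 : k ≤ n-1)
    {x : Fin n} (hadj : (GnS n S).Adj (k : Fin n) x) :
    x = ((k-1 : ℕ) : Fin n) ∨ x = ((k+1 : ℕ) : Fin n) ∨ (k+1 ∈ S ∧ x = ((0:ℕ) : Fin n)) := by
  rw [GnS, SimpleGraph.fromRel_adj] at hadj
  obtain ⟨hne, hrel⟩ := hadj
  have hk : ((k : Fin n)).val = k := by rw [Fin.val_natCast]; exact Nat.mod_eq_of_lt (by omega)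
  rcases hrel with (hr | hc) | (hr | hc)
  · right; left
    rw [Fin.ext_iff, Fin.val_natCast, ← hr, hk]
  · exfalso; rw [hk] at hc; omega
  · left
    rw [hk] at hr
    have hxn : x.val < n := x.isLt
    have hx1 : x.val + 1 < n ∨ x.val + 1 = n := by omega
    rcases hx1 with hx1 | hx1
    · rw [Nat.mod_eq_of_lt hx1] at hr
      rw [Fin.ext_iff, Fin.val_natCast, Nat.mod_eq_of_lt (by omega : k - 1 < n)]
      omega
    · exfalso; rw [hx1, Nat.mod_self] at hr; omega
  · right; right
    refine ⟨?_, ?_⟩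
    · rw [hk] at hc; exact hc.2
    · rw [Fin.ext_iff, Fin.val_natCast, Nat.zero_mod]; exact hc.1

lemma adj_0 (hn : 4 ≤ n) (hS : S ⊆ Finset.Icc 3 (n-1)) {x : Fin n}
    (hadj : (GnS n S).Adj (((0:ℕ)) : Fin n) x) :
    x = ((1 : ℕ) : Fin n) ∨ x = ((n-1 : ℕ) : Fin n) ∨ ∃ a ∈ S, x = ((a-1 : ℕ) : Fin n) := by
  rw [GnS, SimpleGraph.fromRel_adj] at hadj
  obtain ⟨hne, hrel⟩ := hadj
  have h0 : (((0:ℕ) : Fin n)).val = 0 := by rw [Fin.val_natCast, Nat.zero_mod]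
  rcases hrel with (hr | hc) | (hr | hc)
  · left
    rw [h0, Nat.zero_add, Nat.mod_eq_of_lt (by omega : 1 < n)] at hr
    rw [Fin.ext_iff, Fin.val_natCast, Nat.mod_eq_of_lt (by omega : 1 < n), ← hr]
  · right; right
    refine ⟨x.val + 1, hc.2, ?_⟩
    rw [Fin.ext_iff, Fin.val_natCast]
    have : x.val + 1 - 1 = x.val := by omega
    rw [this, Nat.mod_eq_of_lt x.isLt]
  · right; left
    rw [h0] at hr
    have hx1 : x.val + 1 = n := by
      rcases Nat.lt_or_ge (x.val+1) n with h2 | h2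
      · rw [Nat.mod_eq_of_lt h2] at hr; omega
      · have := x.isLt; omega
    rw [Fin.ext_iff, Fin.val_natCast, Nat.mod_eq_of_lt (by omega : n-1 < n)]
    omega
  · exfalso
    apply hne
    rw [Fin.ext_iff, h0, hc.1]

lemma id_prev {k : ℕ} (hk : 1 ≤ k) :
    s((k : Fin n), ((k-1 : ℕ) : Fin n)) = re n (k-1) := by
  rw [re]
  have : k - 1 + 1 = k := by omega
  rw [this, Sym2.eq_swap]

lemma id_next (k : ℕ) : s((k : Fin n), ((k+1 : ℕ) : Fin n)) = re n k := rfl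

lemma id_chordk (k : ℕ) : s((k : Fin n), ((0:ℕ) : Fin n)) = ch n (k+1) := by
  rw [ch]
  have : k + 1 - 1 = k := by omega
  rw [this, Sym2.eq_swap]

lemma id_zero_one : s(((0:ℕ) : Fin n), ((1:ℕ) : Fin n)) = re n 0 := rfl

lemma id_zero_last (hn : 4 ≤ n) :
    s(((0:ℕ) : Fin n), ((n-1 : ℕ) : Fin n)) = re n (n-1) := by
  rw [re]
  have h1 : n - 1 + 1 = n := by omega
  have h2 : ((n : ℕ) : Fin n) = ((0:ℕ) : Fin n) := by
    rw [ceq, Nat.mod_self, Nat.zero_mod]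
  rw [h1, h2, Sym2.eq_swap]

lemma id_zero_chord {a : ℕ} : s(((0:ℕ) : Fin n), ((a-1 : ℕ) : Fin n)) = ch n a := rfl

lemma step_lemma (hn : 4 ≤ n) (hS : S ⊆ Finset.Icc 3 (n-1)) {u : Fin n}
    {p : (GnS n S).Walk u u} (hp : p.IsCycle) {k : ℕ} (h1 : 1 ≤ k) (h2 : k ≤ n-1) :
    (re n (k-1) ∈ p.edges ↔ (re n k ∈ p.edges ↔
      ¬ (k+1 ∈ S ∧ ch n (k+1) ∈ p.edges))) := by
  have hN := cycle_nbr p hp (k : Fin n)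
  by_cases hkS : k + 1 ∈ S
  · obtain ⟨hk3, hkn⟩ := Finset.mem_Icc.mp (hS hkS)
    have hsub : {x | s((k : Fin n), x) ∈ p.edges} ⊆
        {((k-1:ℕ) : Fin n), ((k+1:ℕ) : Fin n), ((0:ℕ) : Fin n)} := by
      intro x hx
      have hadj := p.adj_of_mem_edges hx
      rcases adj_k hn hS h1 h2 hadj with h | h | h
      · exact Or.inl h
      · exact Or.inr (Or.inl h)
      · exact Or.inr (Or.inr h.2)
    have h3 := three_rule hN (cne (by omega) (by omega) (by omega))
      (cne (by omega) (by omega) (by omega)) (cne (by omega) (by omega) (by omega)) hsub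
    rw [Set.mem_setOf_eq, Set.mem_setOf_eq, Set.mem_setOf_eq, id_prev h1, id_next,
      id_chordk] at h3
    simp only [hkS, true_and]
    exact h3
  · have hsub : {x | s((k : Fin n), x) ∈ p.edges} ⊆
        {((k-1:ℕ) : Fin n), ((k+1:ℕ) : Fin n)} := by
      intro x hx
      have hadj := p.adj_of_mem_edges hx
      rcases adj_k hn hS h1 h2 hadj with h | h | h
      · exact Or.inl h
      · exact Or.inr h
      · exact absurd h.1 hkS
    have h3 := two_rule hN hsub
    rw [Set.mem_setOf_eq, Set.mem_setOf_eq, id_prev h1, id_next] at h3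
    have h4 : ¬ (k+1 ∈ S ∧ ch n (k+1) ∈ p.edges) := fun h => hkS h.1
    tauto

lemma classify (hn : 4 ≤ n) (hS : S ⊆ Finset.Icc 3 (n-1)) {u : Fin n}
    {p : (GnS n S).Walk u u} (hp : p.IsCycle) :
    {e | e ∈ p.edges} = {e | ∃ i, i < n ∧ e = re n i} ∨
    (∃ a ∈ S, {e | e ∈ p.edges} = {e | e = ch n a ∨ ∃ i, i < a-1 ∧ e = re n i}) ∨
    (∃ a ∈ S, {e | e ∈ p.edges} = {e | e = ch n a ∨ ∃ i, a-1 ≤ i ∧ i < n ∧ e = re n i}) ∨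
    (∃ a ∈ S, ∃ b ∈ S, a < b ∧ {e | e ∈ p.edges} =
      {e | e = ch n a ∨ e = ch n b ∨ ∃ i, a-1 ≤ i ∧ i < b-1 ∧ e = re n i}) := by
  classical
  set T : Finset ℕ := S.filter (fun a => ch n a ∈ p.edges) with hT
  have hTS : T ⊆ S := Finset.filter_subset _ _
  have hTicc : ∀ a ∈ T, 3 ≤ a ∧ a ≤ n-1 := fun a ha => Finset.mem_Icc.mp (hS (hTS ha))
  have hTiff : ∀ a, a ∈ T ↔ (a ∈ S ∧ ch n a ∈ p.edges) := by
    intro a; rw [hT, Finset.mem_filter]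
  have step : ∀ k, 1 ≤ k → k ≤ n-1 →
      (re n (k-1) ∈ p.edges ↔ (re n k ∈ p.edges ↔ ¬ (k+1 ∈ T))) := by
    intro k h1 h2
    have h3 := step_lemma hn hS hp h1 h2
    have h4 := hTiff (k+1)
    tauto
  have hmem1 : ((((1:ℕ)) : Fin n) ∈ {x | s(((0:ℕ):Fin n), x) ∈ p.edges}) ↔
      re n 0 ∈ p.edges := by rw [Set.mem_setOf_eq, id_zero_one]
  have hmemn : ((((n-1:ℕ)) : Fin n) ∈ {x | s(((0:ℕ):Fin n), x) ∈ p.edges}) ↔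
      re n (n-1) ∈ p.edges := by rw [Set.mem_setOf_eq, id_zero_last hn]
  have hmemc : ∀ a : ℕ, ((((a-1:ℕ)) : Fin n) ∈ {x | s(((0:ℕ):Fin n), x) ∈ p.edges}) ↔
      ch n a ∈ p.edges := by intro a; rw [Set.mem_setOf_eq, id_zero_chord]
  have hN0 := cycle_nbr p hp (((0:ℕ)) : Fin n)
  have hTmem : ∀ a ∈ T, (((a-1 : ℕ)) : Fin n) ∈ {x | s(((0:ℕ):Fin n), x) ∈ p.edges} := by
    intro a ha
    rw [hmemc a]
    exact ((hTiff a).mp ha).2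
  have hTcard : T.card ≤ 2 := by
    rcases hN0 with hE | ⟨y, z, hyz, hEq⟩
    · have hTe : T = ∅ := by
        rw [Finset.eq_empty_iff_forall_notMem]
        intro a ha
        have := hTmem a ha
        rw [hE] at this
        exact this
      rw [hTe]; simp
    · have hinj : Set.InjOn (fun a => ((a-1:ℕ) : Fin n)) T := by
        intro a ha b hb hab
        have h1 := hTicc a ha; have h2 := hTicc b hb
        simp only at hab
        rw [ceq, Nat.mod_eq_of_lt (by omega), Nat.mod_eq_of_lt (by omega)] at hab
        omega
      have himg : T.image (fun a => ((a-1:ℕ) : Fin n)) ⊆ ({y, z} : Finset (Fin n)) := by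
        intro x hx
        rw [Finset.mem_image] at hx
        obtain ⟨a, ha, rfl⟩ := hx
        have := hTmem a ha
        rw [hEq] at this
        rcases this with h | h
        · exact Finset.mem_insert.mpr (Or.inl h)
        · exact Finset.mem_insert.mpr (Or.inr (Finset.mem_singleton.mpr h))
      calc T.card = (T.image (fun a => ((a-1:ℕ) : Fin n))).card :=
            (Finset.card_image_of_injOn hinj).symm
        _ ≤ ({y,z} : Finset (Fin n)).card := Finset.card_le_card himg
        _ ≤ 2 := by
            refine le_trans (Finset.card_insert_le y {z}) ?_
            simp
  have hcases : T.card = 0 ∨ T.card = 1 ∨ T.card = 2 := by omega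
  rcases hcases with hc | hc | hc
  · -- no chords: the full ring
    have hTe : T = ∅ := Finset.card_eq_zero.mp hc
    have hnoc : ∀ a ∈ S, ch n a ∈ p.edges → False := by
      intro a ha hch
      have : a ∈ T := (hTiff a).mpr ⟨ha, hch⟩
      rw [hTe] at this
      exact absurd this (Finset.notMem_empty a)
    have links : ∀ k, 0 < k → k ≤ n-1 → (re n (k-1) ∈ p.edges ↔ re n k ∈ p.edges) := by
      intro k h1 h2
      have h3 := step k h1 h2
      have h4 : k+1 ∉ T := by rw [hTe]; exact Finset.notMem_empty _
      tauto
    have hall : ∀ j, j ≤ n-1 → (re n 0 ∈ p.edges ↔ re n j ∈ p.edges) := by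
      intro j hj
      exact chainX (fun i => re n i ∈ p.edges) 0 j (by omega)
        (fun k hk1 hk2 => links k hk1 (by omega))
    obtain ⟨e, he⟩ : ∃ e, e ∈ p.edges := by
      have h3 := hp.three_le_length
      have h4 := p.length_edges
      cases hee : p.edges with
      | nil => rw [hee] at h4; simp at h4; omega
      | cons x l => exact ⟨x, hee ▸ (List.mem_cons_self : x ∈ x :: l)⟩
    have hx0 : re n 0 ∈ p.edges := by
      rcases mem_edgeSet_cases hn (p.edges_subset_edgeSet he) with ⟨i, hi, rfl⟩ | ⟨a, ha, rfl⟩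
      · exact (hall i (by omega)).mpr he
      · exact absurd he (fun hc' => hnoc a ha hc')
    left
    ext e'
    simp only [Set.mem_setOf_eq]
    constructor
    · intro he'
      rcases mem_edgeSet_cases hn (p.edges_subset_edgeSet he') with ⟨i, hi, rfl⟩ | ⟨a, ha, rfl⟩
      · exact ⟨i, hi, rfl⟩
      · exact absurd he' (fun hc' => hnoc a ha hc')
    · rintro ⟨i, hi, rfl⟩
      exact (hall i (by omega)).mp hx0
  · -- exactly one chord
    obtain ⟨a, hTa⟩ := Finset.card_eq_one.mp hc
    have haT : a ∈ T := by rw [hTa]; exact Finset.mem_singleton_self a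
    have haS : a ∈ S := hTS haT
    obtain ⟨ha3, han⟩ := hTicc a haT
    have hCa : ch n a ∈ p.edges := ((hTiff a).mp haT).2
    have hmemT : ∀ b, b ∈ T ↔ b = a := by
      intro b; rw [hTa, Finset.mem_singleton]
    have hchord0 := (hmemc a).mpr hCa
    have hsub0 : {x | s(((0:ℕ):Fin n), x) ∈ p.edges} ⊆
        {((a-1:ℕ) : Fin n), ((1:ℕ) : Fin n), ((n-1:ℕ) : Fin n)} := by
      intro x hx
      have hadj := p.adj_of_mem_edges hx
      rcases adj_0 hn hS hadj with h | h | ⟨b, hb, rfl⟩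
      · exact Or.inr (Or.inl h)
      · exact Or.inr (Or.inr h)
      · left
        have hbT : b ∈ T := (hTiff b).mpr ⟨hb, (hmemc b).mp hx⟩
        rw [(hmemT b).mp hbT]
    have h3 := three_rule hN0 (cne (by omega) (by omega) (by omega))
      (cne (by omega) (by omega) (by omega)) (cne (by omega) (by omega) (by omega)) hsub0
    rw [hmem1, hmemn] at h3
    have hxor : re n 0 ∈ p.edges ↔ ¬ re n (n-1) ∈ p.edges := h3.mp hchord0
    have links : ∀ k, 0 < k → k ≤ n-1 → k ≠ a-1 →
        (re n (k-1) ∈ p.edges ↔ re n k ∈ p.edges) := by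
      intro k h1 h2 hka
      have h4 := step k h1 h2
      have h5 : k+1 ∉ T := by
        rw [hmemT]
        omega
      tauto
    have flip : re n (a-2) ∈ p.edges ↔ ¬ re n (a-1) ∈ p.edges := by
      have h4 := step (a-1) (by omega) (by omega)
      rw [show a-1-1 = a-2 from by omega, show a-1+1 = a from by omega] at h4
      have h5 : a ∈ T := haT
      tauto
    have low : ∀ i, i ≤ a-2 → (re n 0 ∈ p.edges ↔ re n i ∈ p.edges) := by
      intro i hi
      exact chainX (fun j => re n j ∈ p.edges) 0 i (by omega)
        (fun k hk1 hk2 => links k hk1 (by omega) (by omega))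
    have high2 : ∀ j, a-1 ≤ j → j ≤ n-1 →
        (re n j ∈ p.edges ↔ re n (n-1) ∈ p.edges) := by
      intro j h1 h2
      exact chainX (fun i => re n i ∈ p.edges) j (n-1) h2
        (fun k hk1 hk2 => links k (by omega) hk2 (by omega))
    by_cases hx0 : re n 0 ∈ p.edges
    · have hlow : ∀ i, i ≤ a-2 → re n i ∈ p.edges := fun i hi => (low i hi).mp hx0
      have hn1 : ¬ re n (n-1) ∈ p.edges := hxor.mp hx0
      have hhigh : ∀ j, a-1 ≤ j → j ≤ n-1 → ¬ re n j ∈ p.edges :=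
        fun j h1 h2 hXj => hn1 ((high2 j h1 h2).mp hXj)
      right; left
      refine ⟨a, haS, ?_⟩
      ext e'
      simp only [Set.mem_setOf_eq]
      constructor
      · intro he'
        rcases mem_edgeSet_cases hn (p.edges_subset_edgeSet he') with ⟨i, hi, rfl⟩ | ⟨b, hb, rfl⟩
        · right
          refine ⟨i, ?_, rfl⟩
          by_contra hlt
          push_neg at hlt
          exact hhigh i (by omega) (by omega) he'
        · left
          have hbT : b ∈ T := (hTiff b).mpr ⟨hb, he'⟩
          rw [(hmemT b).mp hbT]
      · rintro (rfl | ⟨i, hi, rfl⟩)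
        · exact hCa
        · exact hlow i (by omega)
    · have hn1 : re n (n-1) ∈ p.edges := by
        by_contra h
        exact hx0 (hxor.mpr h)
      have hhigh : ∀ j, a-1 ≤ j → j ≤ n-1 → re n j ∈ p.edges :=
        fun j h1 h2 => (high2 j h1 h2).mpr hn1
      have hlow : ∀ i, i ≤ a-2 → ¬ re n i ∈ p.edges :=
        fun i hi hXi => hx0 ((low i hi).mpr hXi)
      right; right; left
      refine ⟨a, haS, ?_⟩
      ext e'
      simp only [Set.mem_setOf_eq]
      constructor
      · intro he'
        rcases mem_edgeSet_cases hn (p.edges_subset_edgeSet he') with ⟨i, hi, rfl⟩ | ⟨b, hb, rfl⟩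
        · right
          refine ⟨i, ?_, hi, rfl⟩
          by_contra hlt
          push_neg at hlt
          exact hlow i (by omega) he'
        · left
          have hbT : b ∈ T := (hTiff b).mpr ⟨hb, he'⟩
          rw [(hmemT b).mp hbT]
      · rintro (rfl | ⟨i, hi1, hi2, rfl⟩)
        · exact hCa
        · exact hhigh i hi1 (by omega)
  · -- exactly two chords
    obtain ⟨x, y, hxy, hTxy⟩ := Finset.card_eq_two.mp hc
    have key : ∀ a b, a < b → T = {a, b} →
        (∃ a' ∈ S, ∃ b' ∈ S, a' < b' ∧ {e | e ∈ p.edges} =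
          {e | e = ch n a' ∨ e = ch n b' ∨ ∃ i, a'-1 ≤ i ∧ i < b'-1 ∧ e = re n i}) := by
      intro a b hab hTab
      have haT : a ∈ T := by rw [hTab]; exact Finset.mem_insert_self a {b}
      have hbT : b ∈ T := by
        rw [hTab]; exact Finset.mem_insert_of_mem (Finset.mem_singleton_self b)
      have haS : a ∈ S := hTS haT
      have hbS : b ∈ S := hTS hbT
      obtain ⟨ha3, han⟩ := hTicc a haT
      obtain ⟨hb3, hbn⟩ := hTicc b hbT
      have hCa : ch n a ∈ p.edges := ((hTiff a).mp haT).2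
      have hCb : ch n b ∈ p.edges := ((hTiff b).mp hbT).2
      have hmemT : ∀ c, c ∈ T ↔ (c = a ∨ c = b) := by
        intro c
        rw [hTab, Finset.mem_insert, Finset.mem_singleton]
      have hA0 := (hmemc a).mpr hCa
      have hB0 := (hmemc b).mpr hCb
      have hd : ((a-1:ℕ) : Fin n) ≠ ((b-1:ℕ) : Fin n) := cne (by omega) (by omega) (by omega)
      rcases hN0 with hE | ⟨y', z', hyz', hEq⟩
      · rw [hE] at hA0; exact absurd hA0 (Set.notMem_empty _)
      · have hN0eq : {x | s(((0:ℕ):Fin n), x) ∈ p.edges} =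
            {((a-1:ℕ) : Fin n), ((b-1:ℕ) : Fin n)} := by
          rw [hEq]
          rw [hEq] at hA0 hB0
          simp only [Set.mem_insert_iff, Set.mem_singleton_iff] at hA0 hB0
          rcases hA0 with h1 | h1 <;> rcases hB0 with h2 | h2
          · exact absurd (h1.trans h2.symm) hd
          · rw [← h1, ← h2]
          · rw [← h1, ← h2, Set.pair_comm]
          · exact absurd (h1.trans h2.symm) hd
        have hx0 : ¬ re n 0 ∈ p.edges := by
          intro h
          have h1 := hmem1.mpr h
          rw [hN0eq] at h1
          rcases h1 with h1 | h1
          · exact cne (by omega) (by omega) (by omega) h1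
          · exact cne (by omega) (by omega) (by omega) h1
        have hxn : ¬ re n (n-1) ∈ p.edges := by
          intro h
          have h1 := hmemn.mpr h
          rw [hN0eq] at h1
          rcases h1 with h1 | h1
          · exact cne (by omega) (by omega) (by omega) h1
          · exact cne (by omega) (by omega) (by omega) h1
        have links : ∀ k, 0 < k → k ≤ n-1 → k ≠ a-1 → k ≠ b-1 →
            (re n (k-1) ∈ p.edges ↔ re n k ∈ p.edges) := by
          intro k h1 h2 hka hkb
          have h4 := step k h1 h2
          have h5 : k+1 ∉ T := by
            rw [hmemT]
            omega
          tauto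
        have low : ∀ i, i ≤ a-2 → ¬ re n i ∈ p.edges := by
          intro i hi hXi
          have := chainX (fun j => re n j ∈ p.edges) 0 i (by omega)
            (fun k hk1 hk2 => links k hk1 (by omega) (by omega) (by omega))
          exact hx0 (this.mpr hXi)
        have flipa : re n (a-1) ∈ p.edges := by
          have h4 := step (a-1) (by omega) (by omega)
          rw [show a-1-1 = a-2 from by omega, show a-1+1 = a from by omega] at h4
          have h5 : a ∈ T := haT
          have h6 := low (a-2) (le_refl _)
          tauto
        have mid : ∀ j, a-1 ≤ j → j ≤ b-2 → re n j ∈ p.edges := by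
          intro j h1 h2
          have := chainX (fun i => re n i ∈ p.edges) (a-1) j h1
            (fun k hk1 hk2 => links k (by omega) (by omega) (by omega) (by omega))
          exact this.mp flipa
        have flipb : ¬ re n (b-1) ∈ p.edges := by
          have h4 := step (b-1) (by omega) (by omega)
          rw [show b-1-1 = b-2 from by omega, show b-1+1 = b from by omega] at h4
          have h5 : b ∈ T := hbT
          have h6 := mid (b-2) (by omega) (le_refl _)
          tauto
        have high : ∀ j, b-1 ≤ j → j ≤ n-1 → ¬ re n j ∈ p.edges := by
          intro j h1 h2 hXj
          have := chainX (fun i => re n i ∈ p.edges) (b-1) j h1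
            (fun k hk1 hk2 => links k (by omega) (by omega) (by omega) (by omega))
          exact flipb (this.mpr hXj)
        refine ⟨a, haS, b, hbS, hab, ?_⟩
        ext e'
        simp only [Set.mem_setOf_eq]
        constructor
        · intro he'
          rcases mem_edgeSet_cases hn (p.edges_subset_edgeSet he') with
            ⟨i, hi, rfl⟩ | ⟨c, hcS, rfl⟩
          · right; right
            rcases (show i ≤ a-2 ∨ (a-1 ≤ i ∧ i ≤ b-2) ∨ b-1 ≤ i from by omega) with
              h | h | h
            · exact absurd he' (low i h)
            · exact ⟨i, h.1, by omega, rfl⟩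
            · exact absurd he' (high i h (by omega))
          · have hcT : c ∈ T := (hTiff c).mpr ⟨hcS, he'⟩
            rcases (hmemT c).mp hcT with rfl | rfl
            · exact Or.inl rfl
            · exact Or.inr (Or.inl rfl)
        · rintro (rfl | rfl | ⟨i, hi1, hi2, rfl⟩)
          · exact hCa
          · exact hCb
          · exact mid i hi1 (by omega)
    right; right; right
    rcases Nat.lt_or_ge x y with h | h
    · exact key x y h hTxy
    · have hyx : y < x := by omega
      rw [Finset.pair_comm] at hTxy
      exact key y x hyx hTxy

def arcW (n : ℕ) [NeZero n] (S : Finset ℕ) (hn : 4 ≤ n) :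
    (i ℓ : ℕ) → (GnS n S).Walk (i : Fin n) ((i+ℓ : ℕ) : Fin n)
  | _, 0 => Walk.nil
  | i, (ℓ+1) => (Walk.cons (ring_adj hn i) (arcW n S hn (i+1) ℓ)).copy rfl
      (by rw [show i+1+ℓ = i+(ℓ+1) from by omega])

lemma cons_map_range {α : Type*} (f : ℕ → α) (m : ℕ) :
    f 0 :: (List.range m).map (fun k => f (k+1)) = (List.range (m+1)).map f := by
  rw [List.range_succ_eq_map, List.map_cons, List.map_map]
  rfl

lemma arcW_support (hn : 4 ≤ n) (i ℓ : ℕ) :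
    (arcW n S hn i ℓ).support = (List.range (ℓ+1)).map (fun k => ((i+k : ℕ) : Fin n)) := by
  induction ℓ generalizing i with
  | zero =>
    simp only [arcW, Walk.support_nil, List.range_succ, List.range_zero, List.map_nil,
      List.nil_append, List.map_cons, Nat.add_zero]
  | succ ℓ ih =>
    have hc : ∀ k : ℕ, ((i+1+k : ℕ) : Fin n) = ((i+(k+1) : ℕ) : Fin n) := fun k => by
      rw [show i+1+k = i+(k+1) from by omega]
    rw [arcW, Walk.support_copy, Walk.support_cons, ih (i+1),
      ← cons_map_range (fun k => ((i+k : ℕ) : Fin n)) (ℓ+1)]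
    refine congrArg₂ List.cons ?_ (List.map_congr_left ?_)
    · rw [Nat.add_zero]
    · intro k _
      exact hc k

lemma arcW_edges (hn : 4 ≤ n) (i ℓ : ℕ) :
    (arcW n S hn i ℓ).edges = (List.range ℓ).map (fun k => re n (i+k)) := by
  induction ℓ generalizing i with
  | zero => simp only [arcW, Walk.edges_nil, List.range_zero, List.map_nil]
  | succ ℓ ih =>
    have hc : ∀ k : ℕ, re n (i+1+k) = re n (i+(k+1)) := fun k => by
      rw [show i+1+k = i+(k+1) from by omega]
    rw [arcW, Walk.edges_copy, Walk.edges_cons, ih (i+1),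
      ← cons_map_range (fun k => re n (i+k)) ℓ]
    refine congrArg₂ List.cons ?_ (List.map_congr_left ?_)
    · simp only [Nat.add_zero]; rfl
    · intro k _
      exact hc k

lemma nodup_map_range (hn : 4 ≤ n) (i m : ℕ) (hm : m ≤ n) :
    ((List.range m).map (fun k => ((i+k : ℕ) : Fin n))).Nodup := by
  apply List.Nodup.map_on ?_ (List.nodup_range (n := m))
  intro x hx y hy hxy
  rw [List.mem_range] at hx hy
  have hxy2 : ((i+x : ℕ) : Fin n) = ((i+y : ℕ) : Fin n) := hxy
  rw [ceq] at hxy2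
  have h2 : x ≡ y [MOD n] := Nat.ModEq.add_left_cancel' i hxy2
  have h3 : x % n = y % n := h2
  rw [Nat.mod_eq_of_lt (by omega), Nat.mod_eq_of_lt (by omega)] at h3
  exact h3

lemma exists_ring (hn : 4 ≤ n) (hS : S ⊆ Finset.Icc 3 (n-1)) :
    ∃ (u : Fin n) (p : (GnS n S).Walk u u), p.IsCycle ∧
      {e | e ∈ p.edges} = {e | ∃ i, i < n ∧ e = re n i} := by
  have hcast : ((1 + (n-1) : ℕ) : Fin n) = (((0:ℕ)) : Fin n) := by
    rw [ceq, show 1+(n-1) = n from by omega, Nat.mod_self, Nat.zero_mod]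
  have hadj : (GnS n S).Adj (((0:ℕ)) : Fin n) (((1:ℕ)) : Fin n) := ring_adj hn 0
  refine ⟨((0:ℕ) : Fin n), Walk.cons hadj ((arcW n S hn 1 (n-1)).copy rfl hcast), ?_, ?_⟩
  · rw [cons_isCycle_iff]
    constructor
    · rw [isPath_def, Walk.support_copy, arcW_support hn]
      exact nodup_map_range hn 1 (n-1+1) (by omega)
    · rw [Walk.edges_copy, arcW_edges hn, id_zero_one]
      intro hmem
      rw [List.mem_map] at hmem
      obtain ⟨k, hk, hre⟩ := hmem
      rw [List.mem_range] at hk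
      have := re_inj hn (by omega) (by omega) hre
      omega
  · ext e
    simp only [Set.mem_setOf_eq, Walk.edges_cons, Walk.edges_copy, arcW_edges hn,
      List.mem_cons, List.mem_map, List.mem_range]
    constructor
    · rintro (rfl | ⟨k, hk, rfl⟩)
      · exact ⟨0, by omega, (id_zero_one).symm⟩
      · exact ⟨1+k, by omega, rfl⟩
    · rintro ⟨i, hi, rfl⟩
      rcases Nat.eq_zero_or_pos i with rfl | hpos
      · exact Or.inl id_zero_one
      · exact Or.inr ⟨i-1, by omega, by rw [show 1+(i-1) = i from by omega]⟩

lemma exists_A (hn : 4 ≤ n) (hS : S ⊆ Finset.Icc 3 (n-1)) {a : ℕ} (haS : a ∈ S) :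
    ∃ (u : Fin n) (p : (GnS n S).Walk u u), p.IsCycle ∧
      {e | e ∈ p.edges} = {e | e = ch n a ∨ ∃ i, i < a-1 ∧ e = re n i} := by
  obtain ⟨ha3, han⟩ := Finset.mem_Icc.mp (hS haS)
  have hstart : ((0 + (a-1) : ℕ) : Fin n) = ((a-1 : ℕ) : Fin n) := by rw [Nat.zero_add]
  have hadj := chord_adj hn ha3 han haS
  refine ⟨((0:ℕ) : Fin n),
    Walk.cons hadj ((arcW n S hn 0 (a-1)).reverse.copy hstart rfl), ?_, ?_⟩
  · rw [cons_isCycle_iff]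
    constructor
    · rw [isPath_def, Walk.support_copy, Walk.support_reverse, arcW_support hn]
      rw [List.nodup_reverse]
      exact nodup_map_range hn 0 (a-1+1) (by omega)
    · rw [Walk.edges_copy, Walk.edges_reverse, List.mem_reverse, arcW_edges hn, id_zero_chord]
      intro hmem
      rw [List.mem_map] at hmem
      obtain ⟨k, hk, hre⟩ := hmem
      rw [List.mem_range] at hk
      exact ch_ne_re hn ha3 han (by omega) hre.symm
  · ext e
    simp only [Set.mem_setOf_eq, Walk.edges_cons, Walk.edges_copy, Walk.edges_reverse,
      List.mem_cons, List.mem_reverse, arcW_edges hn, List.mem_map, List.mem_range,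
      id_zero_chord]
    constructor
    · rintro (rfl | ⟨k, hk, rfl⟩)
      · exact Or.inl rfl
      · exact Or.inr ⟨0+k, by omega, rfl⟩
    · rintro (rfl | ⟨i, hi, rfl⟩)
      · exact Or.inl rfl
      · exact Or.inr ⟨i, hi, by rw [Nat.zero_add]⟩

lemma exists_B (hn : 4 ≤ n) (hS : S ⊆ Finset.Icc 3 (n-1)) {a : ℕ} (haS : a ∈ S) :
    ∃ (u : Fin n) (p : (GnS n S).Walk u u), p.IsCycle ∧
      {e | e ∈ p.edges} = {e | e = ch n a ∨ ∃ i, a-1 ≤ i ∧ i < n ∧ e = re n i} := by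
  obtain ⟨ha3, han⟩ := Finset.mem_Icc.mp (hS haS)
  have hend : ((a-1 + (n-(a-1)) : ℕ) : Fin n) = (((0:ℕ)) : Fin n) := by
    rw [show a-1+(n-(a-1)) = n from by omega, ceq, Nat.mod_self, Nat.zero_mod]
  have hadj := chord_adj hn ha3 han haS
  refine ⟨((0:ℕ) : Fin n),
    Walk.cons hadj ((arcW n S hn (a-1) (n-(a-1))).copy rfl hend), ?_, ?_⟩
  · rw [cons_isCycle_iff]
    constructor
    · rw [isPath_def, Walk.support_copy, arcW_support hn]
      exact nodup_map_range hn (a-1) (n-(a-1)+1) (by omega)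
    · rw [Walk.edges_copy, arcW_edges hn, id_zero_chord]
      intro hmem
      rw [List.mem_map] at hmem
      obtain ⟨k, hk, hre⟩ := hmem
      rw [List.mem_range] at hk
      exact ch_ne_re hn ha3 han (by omega) hre.symm
  · ext e
    simp only [Set.mem_setOf_eq, Walk.edges_cons, Walk.edges_copy, arcW_edges hn,
      List.mem_cons, List.mem_map, List.mem_range, id_zero_chord]
    constructor
    · rintro (rfl | ⟨k, hk, rfl⟩)
      · exact Or.inl rfl
      · exact Or.inr ⟨a-1+k, by omega, by omega, rfl⟩
    · rintro (rfl | ⟨i, hi1, hi2, rfl⟩)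
      · exact Or.inl rfl
      · exact Or.inr ⟨i-(a-1), by omega, by rw [show a-1+(i-(a-1)) = i from by omega]⟩

lemma exists_D (hn : 4 ≤ n) (hS : S ⊆ Finset.Icc 3 (n-1)) {a b : ℕ} (haS : a ∈ S)
    (hbS : b ∈ S) (hab : a < b) :
    ∃ (u : Fin n) (p : (GnS n S).Walk u u), p.IsCycle ∧
      {e | e ∈ p.edges} =
        {e | e = ch n a ∨ e = ch n b ∨ ∃ i, a-1 ≤ i ∧ i < b-1 ∧ e = re n i} := by
  obtain ⟨ha3, han⟩ := Finset.mem_Icc.mp (hS haS)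
  obtain ⟨hb3, hbn⟩ := Finset.mem_Icc.mp (hS hbS)
  have h1 : ((a-1 + (b-a) : ℕ) : Fin n) = ((b-1 : ℕ) : Fin n) := by
    rw [show a-1+(b-a) = b-1 from by omega]
  have hadj2 : (GnS n S).Adj ((b-1 : ℕ) : Fin n) (((0:ℕ)) : Fin n) :=
    (chord_adj hn hb3 hbn hbS).symm
  have hchb : s(((b-1:ℕ) : Fin n), (((0:ℕ)) : Fin n)) = ch n b := by
    have := id_chordk (n := n) (b-1)
    rw [show b-1+1 = b from by omega] at this
    exact this
  have hadj := chord_adj hn ha3 han haS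
  refine ⟨((0:ℕ) : Fin n),
    Walk.cons hadj (((arcW n S hn (a-1) (b-a)).copy rfl h1).concat hadj2), ?_, ?_⟩
  · rw [cons_isCycle_iff]
    constructor
    · rw [isPath_def, Walk.support_concat, Walk.support_copy, arcW_support hn,
        List.nodup_append']
      refine ⟨nodup_map_range hn (a-1) (b-a+1) (by omega), List.nodup_singleton _, ?_⟩
      intro x hx
      rw [List.mem_map] at hx
      obtain ⟨k, hk, rfl⟩ := hx
      rw [List.mem_range] at hk
      simp only [List.mem_singleton]
      exact cne (by omega) (by omega) (by omega)
    · rw [Walk.edges_concat, Walk.edges_copy, arcW_edges hn, id_zero_chord,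
        List.concat_eq_append, List.mem_append]
      rintro (hmem | hmem)
      · rw [List.mem_map] at hmem
        obtain ⟨k, hk, hre⟩ := hmem
        rw [List.mem_range] at hk
        exact ch_ne_re hn ha3 han (by omega) hre.symm
      · rw [List.mem_singleton, hchb] at hmem
        have := ch_inj hn ha3 han hb3 hbn hmem
        omega
  · ext e
    simp only [Set.mem_setOf_eq, Walk.edges_cons, Walk.edges_concat, Walk.edges_copy,
      arcW_edges hn, List.concat_eq_append, List.mem_append, List.mem_cons,
      List.mem_map, List.mem_range, List.mem_singleton, id_zero_chord, hchb]
    constructor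
    · rintro (rfl | ⟨k, hk, rfl⟩ | rfl | h)
      · exact Or.inl rfl
      · exact Or.inr (Or.inr ⟨a-1+k, by omega, by omega, rfl⟩)
      · exact Or.inr (Or.inl rfl)
      · exact absurd h (List.not_mem_nil (a := e))
    · rintro (rfl | rfl | ⟨i, hi1, hi2, rfl⟩)
      · exact Or.inl rfl
      · exact Or.inr (Or.inr (Or.inl rfl))
      · exact Or.inr (Or.inl ⟨i-(a-1), by omega, by rw [show a-1+(i-(a-1)) = i from by omega]⟩)

lemma ch_not_mem_ring (hn : 4 ≤ n) {c : ℕ} (hc3 : 3 ≤ c) (hcn : c ≤ n-1) :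
    ch n c ∉ {e : Sym2 (Fin n) | ∃ i, i < n ∧ e = re n i} := by
  rintro ⟨i, hi, h⟩
  exact ch_ne_re hn hc3 hcn hi h

lemma ch_mem_A_iff (hn : 4 ≤ n) {c a : ℕ} (hc3 : 3 ≤ c) (hcn : c ≤ n-1) (ha3 : 3 ≤ a)
    (han : a ≤ n-1) :
    ch n c ∈ {e : Sym2 (Fin n) | e = ch n a ∨ ∃ i, i < a-1 ∧ e = re n i} ↔ c = a := by
  constructor
  · rintro (h | ⟨i, hi, h⟩)
    · exact ch_inj hn hc3 hcn ha3 han h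
    · exact absurd h (ch_ne_re hn hc3 hcn (by omega))
  · rintro rfl; exact Or.inl rfl

lemma ch_mem_B_iff (hn : 4 ≤ n) {c a : ℕ} (hc3 : 3 ≤ c) (hcn : c ≤ n-1) (ha3 : 3 ≤ a)
    (han : a ≤ n-1) :
    ch n c ∈ {e : Sym2 (Fin n) | e = ch n a ∨ ∃ i, a-1 ≤ i ∧ i < n ∧ e = re n i} ↔ c = a := by
  constructor
  · rintro (h | ⟨i, hi1, hi2, h⟩)
    · exact ch_inj hn hc3 hcn ha3 han h
    · exact absurd h (ch_ne_re hn hc3 hcn hi2)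
  · rintro rfl; exact Or.inl rfl

lemma ch_mem_D_iff (hn : 4 ≤ n) {c a b : ℕ} (hc3 : 3 ≤ c) (hcn : c ≤ n-1) (ha3 : 3 ≤ a)
    (han : a ≤ n-1) (hb3 : 3 ≤ b) (hbn : b ≤ n-1) :
    ch n c ∈ {e : Sym2 (Fin n) | e = ch n a ∨ e = ch n b ∨
      ∃ i, a-1 ≤ i ∧ i < b-1 ∧ e = re n i} ↔ (c = a ∨ c = b) := by
  constructor
  · rintro (h | h | ⟨i, hi1, hi2, h⟩)
    · exact Or.inl (ch_inj hn hc3 hcn ha3 han h)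
    · exact Or.inr (ch_inj hn hc3 hcn hb3 hbn h)
    · exact absurd h (ch_ne_re hn hc3 hcn (by omega))
  · rintro (rfl | rfl)
    · exact Or.inl rfl
    · exact Or.inr (Or.inl rfl)

lemma re0_mem_A {a : ℕ} (ha3 : 3 ≤ a) :
    re n 0 ∈ {e : Sym2 (Fin n) | e = ch n a ∨ ∃ i, i < a-1 ∧ e = re n i} :=
  Or.inr ⟨0, by omega, rfl⟩

lemma re0_not_mem_B (hn : 4 ≤ n) {a : ℕ} (ha3 : 3 ≤ a) (han : a ≤ n-1) :
    re n 0 ∉ {e : Sym2 (Fin n) | e = ch n a ∨ ∃ i, a-1 ≤ i ∧ i < n ∧ e = re n i} := by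
  rintro (h | ⟨i, hi1, hi2, h⟩)
  · exact ch_ne_re hn ha3 han (by omega) h.symm
  · have := re_inj hn (by omega) hi2 h
    omega

lemma card_pairs (S : Finset ℕ) :
    ((S ×ˢ S).filter (fun p => p.1 < p.2)).card = S.card.choose 2 := by
  classical
  rw [← Finset.card_powersetCard 2 S]
  apply Finset.card_bij (fun p _ => ({p.1, p.2} : Finset ℕ))
  · intro p hp
    rw [Finset.mem_filter, Finset.mem_product] at hp
    rw [Finset.mem_powersetCard]
    constructor
    · intro x hx
      rcases Finset.mem_insert.mp hx with rfl | hx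
      · exact hp.1.1
      · rw [Finset.mem_singleton.mp hx]; exact hp.1.2
    · exact Finset.card_pair (by omega : p.1 ≠ p.2)
  · intro p hp q hq hpq
    rw [Finset.mem_filter, Finset.mem_product] at hp hq
    have h1 : p.1 ∈ ({q.1, q.2} : Finset ℕ) := by
      rw [← hpq]; exact Finset.mem_insert_self _ _
    have h2 : p.2 ∈ ({q.1, q.2} : Finset ℕ) := by
      rw [← hpq]; exact Finset.mem_insert_of_mem (Finset.mem_singleton_self _)
    have h3 : q.1 ∈ ({p.1, p.2} : Finset ℕ) := by
      rw [hpq]; exact Finset.mem_insert_self _ _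
    simp only [Finset.mem_insert, Finset.mem_singleton] at h1 h2 h3
    have := hp.2
    have := hq.2
    apply Prod.ext <;> omega
  · intro t ht
    rw [Finset.mem_powersetCard] at ht
    obtain ⟨x, y, hxy, rfl⟩ := Finset.card_eq_two.mp ht.2
    have hx : x ∈ S := ht.1 (Finset.mem_insert_self _ _)
    have hy : y ∈ S := ht.1 (Finset.mem_insert_of_mem (Finset.mem_singleton_self _))
    rcases Nat.lt_or_ge x y with h | h
    · refine ⟨(x, y), ?_, rfl⟩
      rw [Finset.mem_filter, Finset.mem_product]
      exact ⟨⟨hx, hy⟩, h⟩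
    · refine ⟨(y, x), ?_, ?_⟩
      · rw [Finset.mem_filter, Finset.mem_product]
        exact ⟨⟨hy, hx⟩, by omega⟩
      · rw [Finset.pair_comm]

def fidx (n : ℕ) [NeZero n] : Unit ⊕ ℕ × Bool ⊕ ℕ × ℕ → Set (Sym2 (Fin n))
  | Sum.inl _ => {e | ∃ i, i < n ∧ e = re n i}
  | Sum.inr (Sum.inl (a, true)) => {e | e = ch n a ∨ ∃ i, i < a-1 ∧ e = re n i}
  | Sum.inr (Sum.inl (a, false)) => {e | e = ch n a ∨ ∃ i, a-1 ≤ i ∧ i < n ∧ e = re n i}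
  | Sum.inr (Sum.inr (a, b)) =>
      {e | e = ch n a ∨ e = ch n b ∨ ∃ i, a-1 ≤ i ∧ i < b-1 ∧ e = re n i}

def Idx (S : Finset ℕ) : Finset (Unit ⊕ ℕ × Bool ⊕ ℕ × ℕ) :=
  {Sum.inl ()} ∪ (S ×ˢ (Finset.univ : Finset Bool)).image (fun p => Sum.inr (Sum.inl p))
    ∪ ((S ×ˢ S).filter (fun p => p.1 < p.2)).image (fun p => Sum.inr (Sum.inr p))

lemma Idx_shape {S : Finset ℕ} {z : Unit ⊕ ℕ × Bool ⊕ ℕ × ℕ} (hz : z ∈ Idx S) :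
    z = Sum.inl () ∨ (∃ a ∈ S, ∃ t : Bool, z = Sum.inr (Sum.inl (a, t))) ∨
      (∃ a ∈ S, ∃ b ∈ S, a < b ∧ z = Sum.inr (Sum.inr (a, b))) := by
  rcases Finset.mem_union.mp hz with hz | hz
  · rcases Finset.mem_union.mp hz with hz | hz
    · exact Or.inl (Finset.mem_singleton.mp hz)
    · obtain ⟨p, hp, rfl⟩ := Finset.mem_image.mp hz
      obtain ⟨h1, -⟩ := Finset.mem_product.mp hp
      exact Or.inr (Or.inl ⟨p.1, h1, p.2, rfl⟩)
  · obtain ⟨p, hp, rfl⟩ := Finset.mem_image.mp hz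
    rw [Finset.mem_filter, Finset.mem_product] at hp
    exact Or.inr (Or.inr ⟨p.1, hp.1.1, p.2, hp.1.2, hp.2, rfl⟩)

lemma mem_Idx_ring {S : Finset ℕ} : (Sum.inl () : Unit ⊕ ℕ × Bool ⊕ ℕ × ℕ) ∈ Idx S :=
  Finset.mem_union_left _ (Finset.mem_union_left _ (Finset.mem_singleton_self _))

lemma mem_Idx_ab {S : Finset ℕ} {a : ℕ} (haS : a ∈ S) (t : Bool) :
    (Sum.inr (Sum.inl (a, t)) : Unit ⊕ ℕ × Bool ⊕ ℕ × ℕ) ∈ Idx S :=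
  Finset.mem_union_left _ (Finset.mem_union_right _ (Finset.mem_image.mpr
    ⟨(a, t), Finset.mem_product.mpr ⟨haS, Finset.mem_univ t⟩, rfl⟩))

lemma mem_Idx_d {S : Finset ℕ} {a b : ℕ} (haS : a ∈ S) (hbS : b ∈ S) (hab : a < b) :
    (Sum.inr (Sum.inr (a, b)) : Unit ⊕ ℕ × Bool ⊕ ℕ × ℕ) ∈ Idx S :=
  Finset.mem_union_right _ (Finset.mem_image.mpr
    ⟨(a, b), by rw [Finset.mem_filter, Finset.mem_product]; exact ⟨⟨haS, hbS⟩, hab⟩, rfl⟩)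

lemma Idx_card (S : Finset ℕ) : (Idx S).card = 1 + 2 * S.card + S.card.choose 2 := by
  classical
  rw [Idx, Finset.card_union_of_disjoint, Finset.card_union_of_disjoint]
  · rw [Finset.card_singleton,
      Finset.card_image_of_injective _ (fun p q h => by simpa using h),
      Finset.card_image_of_injective _ (fun p q h => by simpa using h),
      Finset.card_product, card_pairs]
    simp only [Finset.card_univ, Fintype.card_bool]
    omega
  · rw [Finset.disjoint_left]
    intro z hz hz'
    obtain ⟨q, -, hq⟩ := Finset.mem_image.mp hz'
    rw [← hq] at hz
    simp at hz
  · rw [Finset.disjoint_left]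
    intro z hz hz'
    obtain ⟨p, -, rfl⟩ := Finset.mem_image.mp hz'
    rcases Finset.mem_union.mp hz with hz | hz
    · simp at hz
    · obtain ⟨q, -, hq⟩ := Finset.mem_image.mp hz
      simp at hq

end FinStuff

end Stmt8Aux

open Stmt8Aux Fin.NatCast in
/-- If `n ≥ 4` and `S ⊆ {3, ..., n-1}`, then `G_n(S)` has exactly `1 + 2|S| + C(|S|, 2)`
cycles, where cycles are counted as subgraphs, i.e. two cycles are the same exactly when
they have the same edge set. -/
theorem stmt8 (n : ℕ) (hn : 4 ≤ n) (S : Finset ℕ) (hS : S ⊆ Finset.Icc 3 (n - 1)) :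
    Set.ncard {E : Set (Sym2 (Fin n)) |
        ∃ (u : Fin n) (p : (GnS n S).Walk u u), p.IsCycle ∧ E = {e | e ∈ p.edges}} =
      1 + 2 * S.card + Nat.choose S.card 2 := by
  haveI : NeZero n := ⟨by omega⟩
  classical
  have bound : ∀ c ∈ S, 3 ≤ c ∧ c ≤ n-1 := fun c hc => Finset.mem_Icc.mp (hS hc)
  have hset : {E : Set (Sym2 (Fin n)) |
      ∃ (u : Fin n) (p : (GnS n S).Walk u u), p.IsCycle ∧ E = {e | e ∈ p.edges}} =
      ↑((Idx S).image (fidx n)) := by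
    ext E
    simp only [Set.mem_setOf_eq, Finset.coe_image, Set.mem_image, Finset.mem_coe]
    constructor
    · rintro ⟨u, p, hp, rfl⟩
      rcases classify hn hS hp with h | ⟨a, haS, h⟩ | ⟨a, haS, h⟩ |
        ⟨a, haS, b, hbS, hab, h⟩
      · exact ⟨Sum.inl (), mem_Idx_ring, h.symm⟩
      · exact ⟨Sum.inr (Sum.inl (a, true)), mem_Idx_ab haS true, h.symm⟩
      · exact ⟨Sum.inr (Sum.inl (a, false)), mem_Idx_ab haS false, h.symm⟩
      · exact ⟨Sum.inr (Sum.inr (a, b)), mem_Idx_d haS hbS hab, h.symm⟩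
    · rintro ⟨z, hz, rfl⟩
      rcases Idx_shape hz with rfl | ⟨a, haS, t, rfl⟩ | ⟨a, haS, b, hbS, hab, rfl⟩
      · obtain ⟨u, p, hp, hE⟩ := exists_ring hn hS
        exact ⟨u, p, hp, hE.symm⟩
      · cases t
        · obtain ⟨u, p, hp, hE⟩ := exists_B hn hS haS
          exact ⟨u, p, hp, hE.symm⟩
        · obtain ⟨u, p, hp, hE⟩ := exists_A hn hS haS
          exact ⟨u, p, hp, hE.symm⟩
      · obtain ⟨u, p, hp, hE⟩ := exists_D hn hS haS hbS hab
        exact ⟨u, p, hp, hE.symm⟩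
  rw [hset, Set.ncard_coe_finset]
  have hinj : Set.InjOn (fidx n) (Idx S) := by
    intro x hx y hy hxy
    rcases Idx_shape hx with rfl | ⟨a, haS, t, rfl⟩ | ⟨a, haS, b, hbS, hab, rfl⟩ <;>
      rcases Idx_shape hy with rfl | ⟨a', ha'S, t', rfl⟩ | ⟨a', ha'S, b', hb'S, hab', rfl⟩
    · rfl
    · exfalso
      cases t'
      · have h1 : ch n a' ∈ fidx n (Sum.inr (Sum.inl (a', false))) := Or.inl rfl
        rw [← hxy] at h1
        exact ch_not_mem_ring hn (bound a' ha'S).1 (bound a' ha'S).2 h1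
      · have h1 : ch n a' ∈ fidx n (Sum.inr (Sum.inl (a', true))) := Or.inl rfl
        rw [← hxy] at h1
        exact ch_not_mem_ring hn (bound a' ha'S).1 (bound a' ha'S).2 h1
    · exfalso
      have h1 : ch n a' ∈ fidx n (Sum.inr (Sum.inr (a', b'))) := Or.inl rfl
      rw [← hxy] at h1
      exact ch_not_mem_ring hn (bound a' ha'S).1 (bound a' ha'S).2 h1
    · exfalso
      cases t
      · have h1 : ch n a ∈ fidx n (Sum.inr (Sum.inl (a, false))) := Or.inl rfl
        rw [hxy] at h1
        exact ch_not_mem_ring hn (bound a haS).1 (bound a haS).2 h1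
      · have h1 : ch n a ∈ fidx n (Sum.inr (Sum.inl (a, true))) := Or.inl rfl
        rw [hxy] at h1
        exact ch_not_mem_ring hn (bound a haS).1 (bound a haS).2 h1
    · cases t <;> cases t'
      · have h1 : ch n a ∈ fidx n (Sum.inr (Sum.inl (a, false))) := Or.inl rfl
        rw [hxy] at h1
        have := (ch_mem_B_iff hn (bound a haS).1 (bound a haS).2 (bound a' ha'S).1
          (bound a' ha'S).2).mp h1
        rw [this]
      · exfalso
        have h1 : ch n a ∈ fidx n (Sum.inr (Sum.inl (a, false))) := Or.inl rfl
        rw [hxy] at h1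
        have ha' := (ch_mem_A_iff hn (bound a haS).1 (bound a haS).2 (bound a' ha'S).1
          (bound a' ha'S).2).mp h1
        have h2 : re n 0 ∈ fidx n (Sum.inr (Sum.inl (a', true))) :=
          re0_mem_A (bound a' ha'S).1
        rw [← hxy] at h2
        exact re0_not_mem_B hn (bound a haS).1 (bound a haS).2 h2
      · exfalso
        have h1 : ch n a ∈ fidx n (Sum.inr (Sum.inl (a, true))) := Or.inl rfl
        rw [hxy] at h1
        have ha' := (ch_mem_B_iff hn (bound a haS).1 (bound a haS).2 (bound a' ha'S).1
          (bound a' ha'S).2).mp h1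
        have h2 : re n 0 ∈ fidx n (Sum.inr (Sum.inl (a, true))) :=
          re0_mem_A (bound a haS).1
        rw [hxy] at h2
        exact re0_not_mem_B hn (bound a' ha'S).1 (bound a' ha'S).2 h2
      · have h1 : ch n a ∈ fidx n (Sum.inr (Sum.inl (a, true))) := Or.inl rfl
        rw [hxy] at h1
        have := (ch_mem_A_iff hn (bound a haS).1 (bound a haS).2 (bound a' ha'S).1
          (bound a' ha'S).2).mp h1
        rw [this]
    · exfalso
      have h1 : ch n a' ∈ fidx n (Sum.inr (Sum.inr (a', b'))) := Or.inl rfl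
      have h2 : ch n b' ∈ fidx n (Sum.inr (Sum.inr (a', b'))) := Or.inr (Or.inl rfl)
      rw [← hxy] at h1 h2
      cases t
      · have e1 := (ch_mem_B_iff hn (bound a' ha'S).1 (bound a' ha'S).2 (bound a haS).1
          (bound a haS).2).mp h1
        have e2 := (ch_mem_B_iff hn (bound b' hb'S).1 (bound b' hb'S).2 (bound a haS).1
          (bound a haS).2).mp h2
        omega
      · have e1 := (ch_mem_A_iff hn (bound a' ha'S).1 (bound a' ha'S).2 (bound a haS).1
          (bound a haS).2).mp h1
        have e2 := (ch_mem_A_iff hn (bound b' hb'S).1 (bound b' hb'S).2 (bound a haS).1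
          (bound a haS).2).mp h2
        omega
    · exfalso
      have h1 : ch n a ∈ fidx n (Sum.inr (Sum.inr (a, b))) := Or.inl rfl
      rw [hxy] at h1
      exact ch_not_mem_ring hn (bound a haS).1 (bound a haS).2 h1
    · exfalso
      have h1 : ch n a ∈ fidx n (Sum.inr (Sum.inr (a, b))) := Or.inl rfl
      have h2 : ch n b ∈ fidx n (Sum.inr (Sum.inr (a, b))) := Or.inr (Or.inl rfl)
      rw [hxy] at h1 h2
      cases t'
      · have e1 := (ch_mem_B_iff hn (bound a haS).1 (bound a haS).2 (bound a' ha'S).1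
          (bound a' ha'S).2).mp h1
        have e2 := (ch_mem_B_iff hn (bound b hbS).1 (bound b hbS).2 (bound a' ha'S).1
          (bound a' ha'S).2).mp h2
        omega
      · have e1 := (ch_mem_A_iff hn (bound a haS).1 (bound a haS).2 (bound a' ha'S).1
          (bound a' ha'S).2).mp h1
        have e2 := (ch_mem_A_iff hn (bound b hbS).1 (bound b hbS).2 (bound a' ha'S).1
          (bound a' ha'S).2).mp h2
        omega
    · have h1 : ch n a ∈ fidx n (Sum.inr (Sum.inr (a, b))) := Or.inl rfl
      have h2 : ch n b ∈ fidx n (Sum.inr (Sum.inr (a, b))) := Or.inr (Or.inl rfl)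
      have h3 : ch n a' ∈ fidx n (Sum.inr (Sum.inr (a', b'))) := Or.inl rfl
      have h4 : ch n b' ∈ fidx n (Sum.inr (Sum.inr (a', b'))) := Or.inr (Or.inl rfl)
      rw [hxy] at h1 h2
      rw [← hxy] at h3 h4
      have e1 := (ch_mem_D_iff hn (bound a haS).1 (bound a haS).2 (bound a' ha'S).1
        (bound a' ha'S).2 (bound b' hb'S).1 (bound b' hb'S).2).mp h1
      have e2 := (ch_mem_D_iff hn (bound b hbS).1 (bound b hbS).2 (bound a' ha'S).1
        (bound a' ha'S).2 (bound b' hb'S).1 (bound b' hb'S).2).mp h2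
      have e3 := (ch_mem_D_iff hn (bound a' ha'S).1 (bound a' ha'S).2 (bound a haS).1
        (bound a haS).2 (bound b hbS).1 (bound b hbS).2).mp h3
      have e4 := (ch_mem_D_iff hn (bound b' hb'S).1 (bound b' hb'S).2 (bound a haS).1
        (bound a haS).2 (bound b hbS).1 (bound b hbS).2).mp h4
      have : a = a' ∧ b = b' := by omega
      rw [this.1, this.2]
  rw [Finset.card_image_of_injOn hinj, Idx_card]
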